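/- Let X = (X_1,…,X_n) and Y = (Y_1,…,Y_n) be random vectors in ℝ^n with X_i equal in distribution to Y_i for each i = 1,…,n. If X ≤_wcs Y, then X ≤_sm Y, i.e. Ef(X) ≤ Ef(Y) for every bounded measurable supermodular function f : ℝ^n → ℝ. -/

import Mathlib

open MeasureTheory ProbabilityTheory

/-- `f` depends only on the coordinates in `A`. -/
def DepOn {n : ℕ} (f : (Fin n → ℝ) → ℝ) (A : Set (Fin n)) : Prop :=
  ∀ x y : Fin n → ℝ, (∀ i ∈ A, x i = y i) → f x = f y

/-- `f` is bounded. -/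
def IsBdd {α : Type*} (f : α → ℝ) : Prop :=
  ∃ C : ℝ, ∀ x, |f x| ≤ C

/-- The covariance `Cov(1{X_i > t}, f(X))`. -/
noncomputable def covInd {Ω : Type*} [MeasurableSpace Ω] (μ : Measure Ω) {n : ℕ}
    (X : Ω → Fin n → ℝ) (i : Fin n) (t : ℝ) (f : (Fin n → ℝ) → ℝ) : ℝ :=
  (∫ ω, (if t < X ω i then (1 : ℝ) else 0) * f (X ω) ∂μ) -
    (μ {ω | t < X ω i}).toReal * ∫ ω, f (X ω) ∂μ

/-- `X ≤_wcs Y`: weakly conditional increasing in sequence order, i.e.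
`Cov(1{X_i > t}, f(X_{i+1}, …, X_n)) ≤ Cov(1{Y_i > t}, f(Y_{i+1}, …, Y_n))`
for all `i = 1, …, n-1`, all `t ∈ ℝ`, and all bounded measurable `f` nondecreasing in each
coordinate (depending only on the coordinates after `i`). -/
def WCSle {Ω₁ Ω₂ : Type*} [MeasurableSpace Ω₁] [MeasurableSpace Ω₂]
    (μ₁ : Measure Ω₁) (μ₂ : Measure Ω₂) {n : ℕ}
    (X : Ω₁ → Fin n → ℝ) (Y : Ω₂ → Fin n → ℝ) : Prop :=
  ∀ (i : Fin n) (t : ℝ) (f : (Fin n → ℝ) → ℝ), (i : ℕ) + 1 < n →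
    Measurable f → Monotone f → IsBdd f → DepOn f {j | i < j} →
    covInd μ₁ X i t f ≤ covInd μ₂ Y i t f

/-- `f : ℝⁿ → ℝ` is supermodular: `Δ_i^ε Δ_j^δ f(x) ≥ 0` for all `x`, all `i < j` and all
`ε, δ > 0`, where `Δ_i^ε f(x) = f(x + ε e_i) - f(x)`. -/
def Supermodular {n : ℕ} (f : (Fin n → ℝ) → ℝ) : Prop :=
  ∀ (x : Fin n → ℝ) (i j : Fin n) (ε δ : ℝ), i < j → 0 < ε → 0 < δ →
    0 ≤ f (x + ε • (Pi.single i 1 : Fin n → ℝ) + δ • (Pi.single j 1 : Fin n → ℝ)) - f (x + δ • (Pi.single j 1 : Fin n → ℝ)) -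
      (f (x + ε • (Pi.single i 1 : Fin n → ℝ)) - f x)

-- chunk 1 : algebra + monotone lemmas
lemma add_single_eq_update {n : ℕ} (z : Fin n → ℝ) (j : Fin n) (δ : ℝ) :
    z + δ • (Pi.single j 1 : Fin n → ℝ) = Function.update z j (z j + δ) := by
  funext k
  by_cases h : k = j
  · subst h; simp
  · simp [Function.update, h, Pi.single_eq_of_ne h]

lemma cons_add_single_zero {n : ℕ} (a ε : ℝ) (z : Fin n → ℝ) :
    (Fin.cons a z : Fin (n+1) → ℝ) + ε • (Pi.single 0 1 : Fin (n+1) → ℝ)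
      = (Fin.cons (a + ε) z : Fin (n+1) → ℝ) := by
  funext k
  refine Fin.cases ?_ (fun l => ?_) k
  · simp
  · simp [Pi.single_eq_of_ne (Fin.succ_ne_zero l)]

lemma cons_add_single_succ {n : ℕ} (a δ : ℝ) (z : Fin n → ℝ) (j : Fin n) :
    (Fin.cons a z : Fin (n+1) → ℝ) + δ • (Pi.single j.succ 1 : Fin (n+1) → ℝ)
      = (Fin.cons a (z + δ • (Pi.single j 1 : Fin n → ℝ)) : Fin (n+1) → ℝ) := by
  funext k
  refine Fin.cases ?_ (fun l => ?_) k
  · simp [Pi.single_eq_of_ne (Ne.symm (Fin.succ_ne_zero j))]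
  · by_cases h : l = j
    · subst h; simp
    · simp [Pi.single_eq_of_ne h, Pi.single_eq_of_ne (fun hc => h (Fin.succ_injective _ hc))]

lemma monotone_of_update {n : ℕ} {F : (Fin n → ℝ) → ℝ}
    (h : ∀ (v : Fin n → ℝ) (j : Fin n) (c : ℝ), v j ≤ c → F v ≤ F (Function.update v j c)) :
    Monotone F := by
  intro w w' hw
  have key : ∀ S : Finset (Fin n), F w ≤ F (S.piecewise w' w) := by
    intro S
    induction S using Finset.induction_on with
    | empty => simp
    | @insert j S hj ih =>
      rw [Finset.piecewise_insert]
      refine le_trans ih (h _ j (w' j) ?_)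
      rw [Finset.piecewise_eq_of_notMem _ _ _ hj]
      exact hw j
  simpa using key Finset.univ

lemma supermod_cons_diff_mono {n : ℕ} {f : (Fin (n+1) → ℝ) → ℝ} (hf : Supermodular f)
    {a b : ℝ} (hab : a ≤ b) :
    Monotone (fun z : Fin n → ℝ => f (Fin.cons b z) - f (Fin.cons a z)) := by
  apply monotone_of_update
  intro v j c hc
  rcases eq_or_lt_of_le hab with h | h
  · subst h; simp
  rcases eq_or_lt_of_le hc with h2 | h2
  · subst h2; simp
  have H := hf (Fin.cons a v) 0 j.succ (b - a) (c - v j) (Fin.succ_pos j)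
    (by linarith) (by linarith)
  rw [cons_add_single_zero, cons_add_single_succ, cons_add_single_succ,
    add_single_eq_update] at H
  have hb : a + (b - a) = b := by ring
  have hcc : v j + (c - v j) = c := by ring
  rw [hb, hcc] at H
  linarith

lemma supermod_cons_y_mono {n : ℕ} {f : (Fin (n+1) → ℝ) → ℝ} (hf : Supermodular f)
    {w w' : Fin n → ℝ} (hww : w' ≤ w) :
    Monotone (fun y : ℝ => f (Fin.cons y w) - f (Fin.cons y w')) := by
  intro y₁ y₂ hy
  have h2 := supermod_cons_diff_mono hf hy hww
  show f (Fin.cons y₁ w) - f (Fin.cons y₁ w') ≤ f (Fin.cons y₂ w) - f (Fin.cons y₂ w')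
  simp only at h2
  linarith

lemma integrable_of_bdd {Ω : Type*} [MeasurableSpace Ω] {μ : Measure Ω} [IsFiniteMeasure μ]
    {g : Ω → ℝ} (hg : AEStronglyMeasurable g μ) {C : ℝ} (h : ∀ ω, |g ω| ≤ C) :
    Integrable g μ := by
  refine Integrable.mono' (integrable_const C) hg (Filter.Eventually.of_forall (fun ω => ?_))
  simpa [Real.norm_eq_abs] using h ω
-- chunk 2 : supermodular integral, grid machinery
lemma measurable_consL {n : ℕ} :
    Measurable (fun p : ℝ × (Fin n → ℝ) => (Fin.cons p.1 p.2 : Fin (n+1) → ℝ)) := by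
  refine measurable_pi_lambda _ (fun k => ?_)
  refine Fin.cases ?_ (fun l => ?_) k
  · exact measurable_fst
  · simp only [Fin.cons_succ]; exact (measurable_pi_apply l).comp measurable_snd

lemma supermodular_integral {n : ℕ} {f : (Fin (n+1) → ℝ) → ℝ}
    (hf : Supermodular f) (hfm : Measurable f) {C : ℝ} (hC : ∀ x, |f x| ≤ C)
    (m : Measure ℝ) [IsProbabilityMeasure m] :
    Supermodular (fun z : Fin n → ℝ => ∫ s, f (Fin.cons s z) ∂m) := by
  intro z i j ε δ hij hε hδ
  have hmeas : ∀ w : Fin n → ℝ, Integrable (fun s => f (Fin.cons s w)) m := by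
    intro w
    refine integrable_of_bdd ?_ (fun s => hC _)
    exact (hfm.comp (measurable_consL.comp (measurable_id.prodMk measurable_const))).aestronglyMeasurable
  have key : ∀ s : ℝ,
      f (Fin.cons s (z + δ • (Pi.single j 1 : Fin n → ℝ)))
          + f (Fin.cons s (z + ε • (Pi.single i 1 : Fin n → ℝ)))
        ≤ f (Fin.cons s (z + ε • (Pi.single i 1 : Fin n → ℝ)
            + δ • (Pi.single j 1 : Fin n → ℝ))) + f (Fin.cons s z) := by
    intro s
    have H := hf (Fin.cons s z) i.succ j.succ ε δ (by simpa [Fin.succ_lt_succ_iff] using hij) hε hδ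
    rw [cons_add_single_succ, cons_add_single_succ, cons_add_single_succ] at H
    linarith
  have hint := integral_mono (μ := m)
    ((hmeas _).add (hmeas _)) ((hmeas _).add (hmeas _)) key
  simp only [Pi.add_apply] at hint
  rw [integral_add (hmeas _) (hmeas _), integral_add (hmeas _) (hmeas _)] at hint
  simp only
  linarith

section Grid

variable (s : ℕ → ℝ) (M : ℕ)

noncomputable def gcnt (x : ℝ) : ℕ := ((Finset.range M).filter (fun k => s k ≤ x)).card

noncomputable def ggam (x : ℝ) : ℝ := s (gcnt s M x - 1)

variable {s M}

lemma gcnt_iff (hs : Monotone s) {k : ℕ} {x : ℝ} (hk : k < M) :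
    s k ≤ x ↔ k < gcnt s M x := by
  constructor
  · intro h
    have hsub : Finset.range (k+1) ⊆ (Finset.range M).filter (fun k => s k ≤ x) := by
      intro l hl
      simp only [Finset.mem_range] at hl
      refine Finset.mem_filter.2 ⟨Finset.mem_range.2 (lt_of_le_of_lt (Nat.lt_succ_iff.1 hl) hk), ?_⟩
      exact le_trans (hs (Nat.lt_succ_iff.1 hl)) h
    have := Finset.card_le_card hsub
    simpa [gcnt] using this
  · intro h
    by_contra hnot
    have hsub : (Finset.range M).filter (fun k => s k ≤ x) ⊆ Finset.range k := by
      intro l hl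
      rcases Finset.mem_filter.1 hl with ⟨_, hl2⟩
      refine Finset.mem_range.2 ?_
      by_contra hlk
      exact hnot (le_trans (hs (not_lt.1 hlk)) hl2)
    have := Finset.card_le_card hsub
    simp only [Finset.card_range] at this
    exact absurd h (not_lt.2 (le_trans (le_of_eq rfl) this))

lemma gcnt_le : gcnt s M x ≤ M := by
  simpa [gcnt] using Finset.card_le_card (Finset.filter_subset _ (Finset.range M))

lemma gcnt_mono (x y : ℝ) (hxy : x ≤ y) : gcnt s M x ≤ gcnt s M y := by
  refine Finset.card_le_card ?_
  intro l hl
  rcases Finset.mem_filter.1 hl with ⟨h1, h2⟩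
  exact Finset.mem_filter.2 ⟨h1, le_trans h2 hxy⟩

lemma ggam_monotone (hs : Monotone s) : Monotone (ggam s M) := by
  intro x y hxy
  exact hs (Nat.sub_le_sub_right (gcnt_mono x y hxy) 1)

lemma ggam_telescope (hs : Monotone s) (hM : 0 < M) (g : ℝ → ℝ) (x : ℝ) :
    ∑ k ∈ Finset.range (M-1), (if s (k+1) ≤ x then g (s (k+1)) - g (s k) else 0)
      = g (ggam s M x) - g (s 0) := by
  have key : ∀ k ∈ Finset.range (M-1),
      (if s (k+1) ≤ x then g (s (k+1)) - g (s k) else 0)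
        = g (min (s (k+1)) (ggam s M x)) - g (min (s k) (ggam s M x)) := by
    intro k hk
    have hkM : k + 1 < M := by
      have := Finset.mem_range.1 hk
      omega
    by_cases h : s (k+1) ≤ x
    · have h1 : k + 1 < gcnt s M x := (gcnt_iff hs hkM).1 h
      have h2 : s (k+1) ≤ ggam s M x := hs (by omega : k + 1 ≤ gcnt s M x - 1)
      have h3 : s k ≤ ggam s M x := le_trans (hs (Nat.le_succ k)) h2
      rw [if_pos h, min_eq_left h2, min_eq_left h3]
    · have h1 : gcnt s M x ≤ k + 1 := by
        by_contra hc
        exact h ((gcnt_iff hs hkM).2 (not_le.1 hc))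
      have h2 : ggam s M x ≤ s k := hs (by omega : gcnt s M x - 1 ≤ k)
      have h3 : ggam s M x ≤ s (k+1) := le_trans h2 (hs (Nat.le_succ k))
      rw [if_neg h, min_eq_right h3, min_eq_right h2, sub_self]
  rw [Finset.sum_congr rfl key, Finset.sum_range_sub (fun k => g (min (s k) (ggam s M x)))]
  have e1 : min (s (M-1)) (ggam s M x) = ggam s M x := by
    refine min_eq_right (hs ?_)
    have := gcnt_le (s := s) (M := M) (x := x)
    omega
  have e2 : min (s 0) (ggam s M x) = s 0 := min_eq_left (hs (Nat.zero_le _))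
  rw [e1, e2]

lemma ggam_hit (hs : Monotone s) {k₀ : ℕ} {x : ℝ} (hk : k₀ < M) (hx : s k₀ = x) :
    ggam s M x = x := by
  have h1 : k₀ < gcnt s M x := (gcnt_iff hs hk).1 (le_of_eq hx)
  have h2 : x ≤ ggam s M x :=
    le_trans (le_of_eq hx.symm) (hs (by omega : k₀ ≤ gcnt s M x - 1))
  have h3 : gcnt s M x - 1 < M := by
    have := gcnt_le (s := s) (M := M) (x := x)
    omega
  have h4 : ggam s M x ≤ x := (gcnt_iff hs h3).2 (by omega)
  linarith

lemma ggam_le (hs : Monotone s) {k₀ : ℕ} {x : ℝ} (hk : k₀ < M) (hx : s k₀ ≤ x) :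
    s k₀ ≤ ggam s M x ∧ ggam s M x ≤ x := by
  have h1 : k₀ < gcnt s M x := (gcnt_iff hs hk).1 hx
  have h3 : gcnt s M x - 1 < M := by
    have := gcnt_le (s := s) (M := M) (x := x)
    omega
  exact ⟨hs (by omega), (gcnt_iff hs h3).2 (by omega)⟩

end Grid
-- chunk 3 : continuity off a countable bad set, grid approximation
noncomputable def Gof {n : ℕ} (f : (Fin (n+1) → ℝ) → ℝ) (y : ℝ) (z : Fin n → ℝ) : ℝ :=
  f (Fin.cons y z) - f (Fin.cons y 0)

def badSet {n : ℕ} (f : (Fin (n+1) → ℝ) → ℝ) : Set ℝ :=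
  ⋃ r : Fin n → ℚ,
    ({x | ¬ContinuousAt (fun y => f (Fin.cons y (fun i => (r i : ℝ)))
        - f (Fin.cons y ((fun i => (r i : ℝ)) ⊓ 0))) x} ∪
     {x | ¬ContinuousAt (fun y => f (Fin.cons y (0 : Fin n → ℝ))
        - f (Fin.cons y ((fun i => (r i : ℝ)) ⊓ 0))) x})

lemma badSet_countable {n : ℕ} {f : (Fin (n+1) → ℝ) → ℝ} (hf : Supermodular f) :
    (badSet f).Countable := by
  refine Set.countable_iUnion (fun r => Set.Countable.union ?_ ?_)
  · exact (supermod_cons_y_mono hf inf_le_left).countable_not_continuousAt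
  · exact (supermod_cons_y_mono hf inf_le_right).countable_not_continuousAt

lemma continuousAt_Gof {n : ℕ} {f : (Fin (n+1) → ℝ) → ℝ} (hf : Supermodular f)
    {x : ℝ} (hx : x ∉ badSet f) (z : Fin n → ℝ) :
    ContinuousAt (fun y => Gof f y z) x := by
  choose r hr using fun i => exists_rat_lt (z i)
  choose R hR using fun i => exists_rat_gt (z i)
  set rr : Fin n → ℝ := fun i => (r i : ℝ) with hrr
  set RR : Fin n → ℝ := fun i => (R i : ℝ) with hRR
  have hrz : rr ≤ z := fun i => (hr i).le
  have hzR : z ≤ RR := fun i => (hR i).le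
  have hcont : ∀ q : Fin n → ℚ, ContinuousAt (fun y => Gof f y (fun i => (q i : ℝ))) x := by
    intro q
    have h1 : ContinuousAt (fun y => f (Fin.cons y (fun i => (q i : ℝ)))
        - f (Fin.cons y ((fun i => (q i : ℝ)) ⊓ 0))) x := by
      by_contra hcon
      exact hx (Set.mem_iUnion.2 ⟨q, Or.inl hcon⟩)
    have h2 : ContinuousAt (fun y => f (Fin.cons y (0 : Fin n → ℝ))
        - f (Fin.cons y ((fun i => (q i : ℝ)) ⊓ 0))) x := by
      by_contra hcon
      exact hx (Set.mem_iUnion.2 ⟨q, Or.inr hcon⟩)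
    have h3 := h1.sub h2
    have : (fun y => (f (Fin.cons y (fun i => (q i : ℝ)))
          - f (Fin.cons y ((fun i => (q i : ℝ)) ⊓ 0)))
        - (f (Fin.cons y (0 : Fin n → ℝ)) - f (Fin.cons y ((fun i => (q i : ℝ)) ⊓ 0))))
        = fun y => Gof f y (fun i => (q i : ℝ)) := by
      funext y; simp only [Gof]; ring
    rw [← this]; exact h3
  have hbound : ∀ y, |Gof f y z - Gof f x z|
      ≤ |Gof f y rr - Gof f x rr| + |Gof f y RR - Gof f x RR| := by
    intro y
    rcases le_total x y with hxy | hxy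
    · have Mon := supermod_cons_diff_mono hf hxy
      have l1 := Mon hrz
      have l2 := Mon hzR
      simp only at l1 l2
      have e1 : Gof f y rr - Gof f x rr ≤ Gof f y z - Gof f x z := by
        simp only [Gof]; linarith
      have e2 : Gof f y z - Gof f x z ≤ Gof f y RR - Gof f x RR := by
        simp only [Gof]; linarith
      have := le_abs_self (Gof f y RR - Gof f x RR)
      have := neg_abs_le (Gof f y rr - Gof f x rr)
      have := abs_nonneg (Gof f y rr - Gof f x rr)
      have := abs_nonneg (Gof f y RR - Gof f x RR)
      rw [abs_le]
      constructor <;> linarith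
    · have Mon := supermod_cons_diff_mono hf hxy
      have l1 := Mon hrz
      have l2 := Mon hzR
      simp only at l1 l2
      have e1 : Gof f x rr - Gof f y rr ≤ Gof f x z - Gof f y z := by
        simp only [Gof]; linarith
      have e2 : Gof f x z - Gof f y z ≤ Gof f x RR - Gof f y RR := by
        simp only [Gof]; linarith
      have := le_abs_self (Gof f x RR - Gof f y RR)
      have := neg_abs_le (Gof f x rr - Gof f y rr)
      have := abs_nonneg (Gof f x rr - Gof f y rr)
      have := abs_nonneg (Gof f x RR - Gof f y RR)
      rw [abs_sub_comm (Gof f y z), abs_sub_comm (Gof f y rr), abs_sub_comm (Gof f y RR), abs_le]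
      constructor <;> linarith
  have hlim : Filter.Tendsto (fun y => |Gof f y rr - Gof f x rr| + |Gof f y RR - Gof f x RR|)
      (nhds x) (nhds 0) := by
    have t1 : Filter.Tendsto (fun y => |Gof f y rr - Gof f x rr|) (nhds x) (nhds 0) := by
      have h2 : Filter.Tendsto (fun y => Gof f y rr - Gof f x rr) (nhds x)
          (nhds (Gof f x rr - Gof f x rr)) := (hcont r).tendsto.sub tendsto_const_nhds
      simpa using h2.abs
    have t2 : Filter.Tendsto (fun y => |Gof f y RR - Gof f x RR|) (nhds x) (nhds 0) := by
      have h2 : Filter.Tendsto (fun y => Gof f y RR - Gof f x RR) (nhds x)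
          (nhds (Gof f x RR - Gof f x RR)) := (hcont R).tendsto.sub tendsto_const_nhds
      simpa using h2.abs
    simpa using t1.add t2
  have hsq := squeeze_zero (fun y => abs_nonneg _) hbound hlim
  refine tendsto_iff_dist_tendsto_zero.2 ?_
  simpa [Real.dist_eq] using hsq

lemma exists_grid {n : ℕ} {f : (Fin (n+1) → ℝ) → ℝ} (hf : Supermodular f) :
    ∃ (s : ℕ → ℕ → ℝ) (M : ℕ → ℕ),
      (∀ m, Monotone (s m)) ∧ (∀ m, 0 < M m) ∧
      (∀ x z, Filter.Tendsto (fun m => Gof f (ggam (s m) (M m) x) z)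
        Filter.atTop (nhds (Gof f x z))) := by
  have hD : (badSet f ∪ Set.range ((↑) : ℚ → ℝ)).Countable :=
    (badSet_countable hf).union (Set.countable_range _)
  obtain ⟨e, he⟩ := hD.exists_eq_range ⟨(0:ℝ), Or.inr ⟨0, by norm_num⟩⟩
  set T : ℕ → Finset ℝ := fun m => (Finset.range (m+1)).image e with hT
  have hTne : ∀ m, (T m).Nonempty := fun m =>
    ⟨e 0, Finset.mem_image.2 ⟨0, Finset.mem_range.2 (Nat.succ_pos m), rfl⟩⟩
  set M : ℕ → ℕ := fun m => (T m).card with hM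
  have hMpos : ∀ m, 0 < M m := fun m => Finset.card_pos.2 (hTne m)
  set s : ℕ → ℕ → ℝ := fun m k =>
    if h : k < M m then ((T m).orderIsoOfFin rfl ⟨k, h⟩ : ℝ)
    else ((T m).orderIsoOfFin rfl ⟨M m - 1, by
      have h3 : 0 < (T m).card := hMpos m
      have h4 : M m = (T m).card := rfl
      omega⟩ : ℝ) with hs
  have smono : ∀ m, Monotone (s m) := by
    intro m k l hkl
    simp only [hs]
    by_cases hk : k < M m
    · by_cases hl : l < M m
      · rw [dif_pos hk, dif_pos hl]
        exact Subtype.coe_le_coe.2 (((T m).orderIsoOfFin rfl).monotone (by exact hkl))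
      · rw [dif_pos hk, dif_neg hl]
        refine Subtype.coe_le_coe.2 (((T m).orderIsoOfFin rfl).monotone ?_)
        exact Fin.mk_le_mk.2 (by
          have h2 : k < (T m).card := hk
          have h3 : 0 < (T m).card := hMpos m
          omega)
    · have hl : ¬ l < M m := fun hc => hk (lt_of_le_of_lt hkl hc)
      rw [dif_neg hk, dif_neg hl]
  have smem : ∀ m t, t ∈ T m → ∃ k, k < M m ∧ s m k = t := by
    intro m t ht
    refine ⟨(((T m).orderIsoOfFin rfl).symm ⟨t, ht⟩ : Fin (M m)), Fin.is_lt _, ?_⟩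
    simp only [hs]
    rw [dif_pos (Fin.is_lt _)]
    simp
  refine ⟨s, M, smono, hMpos, ?_⟩
  intro x z
  by_cases hxD : x ∈ Set.range e
  · obtain ⟨k0, hk0⟩ := hxD
    refine Filter.Tendsto.congr' ?_ tendsto_const_nhds
    filter_upwards [Filter.eventually_ge_atTop k0] with m hm
    have hxT : x ∈ T m :=
      Finset.mem_image.2 ⟨k0, Finset.mem_range.2 (by omega), hk0⟩
    obtain ⟨k, hkM, hsk⟩ := smem m x hxT
    rw [ggam_hit (smono m) hkM hsk]
  · have hxB : x ∉ badSet f := by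
      intro hc
      exact hxD (he ▸ Or.inl hc : x ∈ Set.range e)
    have hγ : Filter.Tendsto (fun m => ggam (s m) (M m) x) Filter.atTop (nhds x) := by
      refine Metric.tendsto_atTop.2 (fun ε hε => ?_)
      obtain ⟨q, hq1, hq2⟩ := exists_rat_btwn (by linarith : x - ε < x)
      have hqD : (q:ℝ) ∈ Set.range e := he ▸ Or.inr ⟨q, rfl⟩
      obtain ⟨k0, hk0⟩ := hqD
      refine ⟨k0, fun m hm => ?_⟩
      have hqT : (q:ℝ) ∈ T m :=
        Finset.mem_image.2 ⟨k0, Finset.mem_range.2 (by omega), hk0⟩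
      obtain ⟨k, hkM, hsk⟩ := smem m (q:ℝ) hqT
      have hle := ggam_le (smono m) hkM (le_of_eq_of_le hsk hq2.le)
      rw [hsk] at hle
      rw [Real.dist_eq, abs_of_nonpos (by linarith [hle.2])]
      linarith [hle.1]
    exact (continuousAt_Gof hf hxB z).tendsto.comp hγ
-- chunk 4 : closed covariance comparison via limits
lemma indicator_integral {Ω : Type*} [MeasurableSpace Ω] (μ : Measure Ω)
    [IsProbabilityMeasure μ] (p : Ω → Prop) [DecidablePred p]
    (hp : MeasurableSet {ω | p ω}) :
    ∫ ω, (if p ω then (1:ℝ) else 0) ∂μ = (μ {ω | p ω}).toReal := by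
  have h : (fun ω => if p ω then (1:ℝ) else 0) = {ω | p ω}.indicator (fun _ => (1:ℝ)) := by
    funext ω
    by_cases hω : p ω <;> simp [Set.indicator_apply, hω]
  rw [h, integral_indicator hp, setIntegral_const]
  simp
  rfl

lemma covC_tendsto {Ω : Type*} [MeasurableSpace Ω] (μ : Measure Ω) [IsProbabilityMeasure μ]
    {n : ℕ} (W : Ω → Fin (n+1) → ℝ) (hW : Measurable W)
    (t : ℝ) (D : (Fin (n+1) → ℝ) → ℝ) (hDm : Measurable D) {c : ℝ} (hDb : ∀ v, |D v| ≤ c) :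
    Filter.Tendsto (fun j : ℕ => covInd μ W 0 (t - 1/(j+1)) D) Filter.atTop
      (nhds ((∫ ω, (if t ≤ W ω 0 then (1:ℝ) else 0) * D (W ω) ∂μ)
        - (μ {ω | t ≤ W ω 0}).toReal * ∫ ω, D (W ω) ∂μ)) := by
  have hW0 : Measurable (fun ω => W ω 0) := (measurable_pi_apply 0).comp hW
  have hts : Filter.Tendsto (fun j : ℕ => t - 1/(j+1 : ℝ)) Filter.atTop (nhds t) := by
    have h0 : Filter.Tendsto (fun j : ℕ => 1/(j+1 : ℝ)) Filter.atTop (nhds 0) :=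
      tendsto_one_div_add_atTop_nhds_zero_nat
    simpa using tendsto_const_nhds.sub h0
  have piece1 : Filter.Tendsto
      (fun j : ℕ => ∫ ω, (if t - 1/(j+1 : ℝ) < W ω 0 then (1:ℝ) else 0) * D (W ω) ∂μ)
      Filter.atTop (nhds (∫ ω, (if t ≤ W ω 0 then (1:ℝ) else 0) * D (W ω) ∂μ)) := by
    refine tendsto_integral_of_dominated_convergence (fun _ => |c|) ?_ (integrable_const _) ?_ ?_
    · intro j
      refine Measurable.aestronglyMeasurable (Measurable.mul ?_ (hDm.comp hW))
      exact Measurable.ite (hW0 measurableSet_Ioi) measurable_const measurable_const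
    · intro j
      refine Filter.Eventually.of_forall (fun ω => ?_)
      rw [Real.norm_eq_abs, abs_mul]
      have hc' : |D (W ω)| ≤ |c| := le_trans (hDb (W ω)) (le_abs_self c)
      by_cases h : t - 1/(j+1 : ℝ) < W ω 0
      · rw [if_pos h]; simpa using hc'
      · rw [if_neg h]; simpa using abs_nonneg c
    · refine Filter.Eventually.of_forall (fun ω => ?_)
      by_cases h : t ≤ W ω 0
      · refine tendsto_const_nhds.congr (fun j => ?_)
        have h1 : t - 1/(j+1 : ℝ) < W ω 0 := by
          have : (0:ℝ) < 1/(j+1 : ℝ) := by positivity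
          linarith
        rw [if_pos h, if_pos h1]
      · push_neg at h
        rw [if_neg (not_le.2 h), zero_mul]
        have hev : ∀ᶠ j : ℕ in Filter.atTop, ¬ (t - 1/(j+1 : ℝ) < W ω 0) := by
          filter_upwards [hts.eventually (eventually_gt_nhds h)] with j hj
          exact not_lt.2 hj.le
        refine Filter.Tendsto.congr' ?_ tendsto_const_nhds
        filter_upwards [hev] with j hj
        rw [if_neg hj, zero_mul]
  have piece2 : Filter.Tendsto
      (fun j : ℕ => (μ {ω | t - 1/(j+1 : ℝ) < W ω 0}).toReal)
      Filter.atTop (nhds ((μ {ω | t ≤ W ω 0}).toReal)) := by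
    have hmeasS : ∀ j : ℕ, MeasurableSet {ω | t - 1/(j+1 : ℝ) < W ω 0} :=
      fun j => hW0 measurableSet_Ioi
    have hanti : Antitone (fun j : ℕ => {ω | t - 1/(j+1 : ℝ) < W ω 0}) := by
      intro j k hjk ω hω
      simp only [Set.mem_setOf_eq] at hω ⊢
      have : 1/(k+1 : ℝ) ≤ 1/(j+1 : ℝ) := by
        apply one_div_le_one_div_of_le
        · positivity
        · have : (j:ℝ) ≤ (k:ℝ) := Nat.cast_le.2 hjk
          linarith
      linarith
    have hiI : (⋂ j : ℕ, {ω | t - 1/(j+1 : ℝ) < W ω 0}) = {ω | t ≤ W ω 0} := by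
      ext ω
      simp only [Set.mem_iInter, Set.mem_setOf_eq]
      constructor
      · intro h
        by_contra hc
        push_neg at hc
        obtain ⟨j, hj⟩ := exists_nat_one_div_lt (by linarith : (0:ℝ) < t - W ω 0)
        have := h j
        linarith
      · intro h j
        have : (0:ℝ) < 1/(j+1 : ℝ) := by positivity
        linarith
    have hlim := tendsto_measure_iInter_atTop (μ := μ)
      (fun j => (hmeasS j).nullMeasurableSet) hanti ⟨0, measure_ne_top μ _⟩
    rw [hiI] at hlim
    exact (ENNReal.tendsto_toReal (measure_ne_top μ _)).comp hlim
  have h : Filter.Tendsto (fun j : ℕ =>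
      (∫ ω, (if t - 1/(j+1 : ℝ) < W ω 0 then (1:ℝ) else 0) * D (W ω) ∂μ)
        - (μ {ω | t - 1/(j+1 : ℝ) < W ω 0}).toReal * ∫ ω, D (W ω) ∂μ) Filter.atTop
      (nhds ((∫ ω, (if t ≤ W ω 0 then (1:ℝ) else 0) * D (W ω) ∂μ)
        - (μ {ω | t ≤ W ω 0}).toReal * ∫ ω, D (W ω) ∂μ)) :=
    piece1.sub (piece2.mul (tendsto_const_nhds (x := ∫ ω, D (W ω) ∂μ)))
  have h2 : (fun j : ℕ => covInd μ W 0 (t - 1/(j+1)) D) = fun j : ℕ =>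
      (∫ ω, (if t - 1/(j+1 : ℝ) < W ω 0 then (1:ℝ) else 0) * D (W ω) ∂μ)
        - (μ {ω | t - 1/(j+1 : ℝ) < W ω 0}).toReal * ∫ ω, D (W ω) ∂μ := rfl
  rw [h2]
  exact h

lemma covC_const_eq {Ω : Type*} [MeasurableSpace Ω] (μ : Measure Ω) [IsProbabilityMeasure μ]
    (W : Ω → Fin (0+1) → ℝ) (hW : Measurable W) (t : ℝ) (D : (Fin (0+1) → ℝ) → ℝ)
    (hD0 : ∀ v, D v = D 0) :
    (∫ ω, (if t ≤ W ω 0 then (1:ℝ) else 0) * D (W ω) ∂μ)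
      - (μ {ω | t ≤ W ω 0}).toReal * ∫ ω, D (W ω) ∂μ = 0 := by
  have hW0 : Measurable (fun ω => W ω 0) := (measurable_pi_apply 0).comp hW
  have hSm : MeasurableSet {ω | t ≤ W ω 0} := hW0 measurableSet_Ici
  have e1 : (fun ω => (if t ≤ W ω 0 then (1:ℝ) else 0) * D (W ω))
      = fun ω => (if t ≤ W ω 0 then (1:ℝ) else 0) * D 0 := by
    funext ω; rw [hD0 (W ω)]
  have e2 : (fun ω => D (W ω)) = fun _ => D 0 := by
    funext ω; rw [hD0 (W ω)]
  rw [e1, e2, integral_mul_const, indicator_integral μ (fun ω => t ≤ W ω 0) hSm, integral_const]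
  simp [mul_comm]

lemma covC_le {Ω₁ Ω₂ : Type*} [MeasurableSpace Ω₁] [MeasurableSpace Ω₂]
    {μ₁ : Measure Ω₁} {μ₂ : Measure Ω₂} [IsProbabilityMeasure μ₁] [IsProbabilityMeasure μ₂]
    {n : ℕ} {X : Ω₁ → Fin (n+1) → ℝ} {Y : Ω₂ → Fin (n+1) → ℝ}
    (hX : Measurable X) (hY : Measurable Y)
    (hwcs : WCSle μ₁ μ₂ X Y)
    (t : ℝ) (D : (Fin (n+1) → ℝ) → ℝ) (hDm : Measurable D) (hDmono : Monotone D)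
    {c : ℝ} (hDb : ∀ v, |D v| ≤ c) (hdep : DepOn D {j | (0 : Fin (n+1)) < j}) :
    (∫ ω, (if t ≤ X ω 0 then (1:ℝ) else 0) * D (X ω) ∂μ₁)
      - (μ₁ {ω | t ≤ X ω 0}).toReal * ∫ ω, D (X ω) ∂μ₁
    ≤ (∫ ω, (if t ≤ Y ω 0 then (1:ℝ) else 0) * D (Y ω) ∂μ₂)
      - (μ₂ {ω | t ≤ Y ω 0}).toReal * ∫ ω, D (Y ω) ∂μ₂ := by
  by_cases hn : (1 : ℕ) < n + 1
  · have key : ∀ j : ℕ, covInd μ₁ X 0 (t - 1/(j+1)) D ≤ covInd μ₂ Y 0 (t - 1/(j+1)) D :=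
      fun j => hwcs 0 (t - 1/(j+1)) D (by simpa using hn) hDm hDmono ⟨c, hDb⟩ hdep
    exact le_of_tendsto_of_tendsto' (covC_tendsto μ₁ X hX t D hDm hDb)
      (covC_tendsto μ₂ Y hY t D hDm hDb) key
  · have hn0 : n = 0 := by omega
    subst hn0
    have hD0 : ∀ v, D v = D 0 := by
      intro v
      refine hdep v 0 (fun i hi => ?_)
      have h2 := i.isLt
      have h1 : i = 0 := by
        apply Fin.ext
        simp only [Fin.val_zero]
        omega
      rw [h1] at hi
      exact absurd hi (lt_irrefl 0)
    rw [covC_const_eq μ₁ X hX t D hD0, covC_const_eq μ₂ Y hY t D hD0]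
-- chunk 5a : measurability helpers and the integrated grid identity
lemma measurable_tailF {n : ℕ} : Measurable (fun v : Fin (n+1) → ℝ => Fin.tail v) :=
  measurable_pi_lambda _ (fun i => measurable_pi_apply i.succ)

lemma monotone_tailF {n : ℕ} : Monotone (fun v : Fin (n+1) → ℝ => Fin.tail v) :=
  fun v w hvw i => hvw i.succ

lemma measurable_GofP {n : ℕ} {f : (Fin (n+1) → ℝ) → ℝ} (hfm : Measurable f) :
    Measurable (fun p : ℝ × (Fin n → ℝ) => Gof f p.1 p.2) := by
  refine Measurable.sub (hfm.comp measurable_consL) ?_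
  exact hfm.comp (measurable_consL.comp (measurable_fst.prodMk measurable_const))

lemma Gof_bdd {n : ℕ} {f : (Fin (n+1) → ℝ) → ℝ} {C : ℝ} (hC : ∀ x, |f x| ≤ C)
    (y : ℝ) (z : Fin n → ℝ) : |Gof f y z| ≤ C + C := by
  unfold Gof
  calc |f (Fin.cons y z) - f (Fin.cons y 0)| ≤ |f (Fin.cons y z)| + |f (Fin.cons y 0)| :=
        abs_sub _ _
    _ ≤ C + C := add_le_add (hC _) (hC _)

lemma grid_identity {Ω : Type*} [MeasurableSpace Ω] (μ : Measure Ω) [IsProbabilityMeasure μ]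
    {n : ℕ} (W : Ω → Fin (n+1) → ℝ) (hW : Measurable W)
    (f : (Fin (n+1) → ℝ) → ℝ) (hfm : Measurable f) {C : ℝ} (hC : ∀ x, |f x| ≤ C)
    (s : ℕ → ℝ) (M : ℕ) (hs : Monotone s) (hM : 0 < M) :
    ∑ k ∈ Finset.range (M - 1),
      ((∫ ω, (if s (k+1) ≤ W ω 0 then (1:ℝ) else 0)
          * (Gof f (s (k+1)) (Fin.tail (W ω)) - Gof f (s k) (Fin.tail (W ω))) ∂μ)
        - (μ {ω | s (k+1) ≤ W ω 0}).toReal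
          * ∫ ω, (Gof f (s (k+1)) (Fin.tail (W ω)) - Gof f (s k) (Fin.tail (W ω))) ∂μ)
    = (∫ ω, Gof f (ggam s M (W ω 0)) (Fin.tail (W ω)) ∂μ)
      - ∫ ω, (∫ u, Gof f (ggam s M u) (Fin.tail (W ω)) ∂(Measure.map (fun ω => W ω 0) μ)) ∂μ := by
  have hW0 : Measurable (fun ω => W ω 0) := (measurable_pi_apply 0).comp hW
  have hTl : Measurable (fun ω => Fin.tail (W ω)) := measurable_tailF.comp hW
  have hGm := measurable_GofP hfm
  have hγm : Measurable (ggam s M) := (ggam_monotone hs).measurable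
  set ν : Measure ℝ := Measure.map (fun ω => W ω 0) μ with hν
  haveI : IsProbabilityMeasure ν := Measure.isProbabilityMeasure_map hW0.aemeasurable
  -- basic integrands
  have hDkm : ∀ k : ℕ, Measurable (fun ω =>
      Gof f (s (k+1)) (Fin.tail (W ω)) - Gof f (s k) (Fin.tail (W ω))) := by
    intro k
    exact ((hGm.comp (measurable_const.prodMk hTl)).sub
      (hGm.comp (measurable_const.prodMk hTl)))
  have hDkb : ∀ k ω, |Gof f (s (k+1)) (Fin.tail (W ω)) - Gof f (s k) (Fin.tail (W ω))|
      ≤ (C + C) + (C + C) := by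
    intro k ω
    calc |Gof f (s (k+1)) (Fin.tail (W ω)) - Gof f (s k) (Fin.tail (W ω))|
        ≤ |Gof f (s (k+1)) (Fin.tail (W ω))| + |Gof f (s k) (Fin.tail (W ω))| := abs_sub _ _
      _ ≤ (C + C) + (C + C) := add_le_add (Gof_bdd hC _ _) (Gof_bdd hC _ _)
  have hDkint : ∀ k : ℕ, Integrable (fun ω =>
      Gof f (s (k+1)) (Fin.tail (W ω)) - Gof f (s k) (Fin.tail (W ω))) μ :=
    fun k => integrable_of_bdd (hDkm k).aestronglyMeasurable (hDkb k)
  have hindm : ∀ k : ℕ, Measurable (fun ω => (if s (k+1) ≤ W ω 0 then (1:ℝ) else 0)) :=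
    fun k => Measurable.ite (hW0 measurableSet_Ici) measurable_const measurable_const
  have haint : ∀ k : ℕ, Integrable (fun ω => (if s (k+1) ≤ W ω 0 then (1:ℝ) else 0)
      * (Gof f (s (k+1)) (Fin.tail (W ω)) - Gof f (s k) (Fin.tail (W ω)))) μ := by
    intro k
    refine integrable_of_bdd ((hindm k).mul (hDkm k)).aestronglyMeasurable
      (C := (C+C)+(C+C)) (fun ω => ?_)
    rw [abs_mul]
    by_cases h : s (k+1) ≤ W ω 0
    · rw [if_pos h]; simpa using hDkb k ω
    · rw [if_neg h]
      simp only [abs_zero, zero_mul]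
      linarith [hDkb k ω, abs_nonneg (Gof f (s (k+1)) (Fin.tail (W ω))
        - Gof f (s k) (Fin.tail (W ω)))]
  -- Part B : sum of first parts
  have partB : ∑ k ∈ Finset.range (M - 1),
      (∫ ω, (if s (k+1) ≤ W ω 0 then (1:ℝ) else 0)
        * (Gof f (s (k+1)) (Fin.tail (W ω)) - Gof f (s k) (Fin.tail (W ω))) ∂μ)
      = (∫ ω, Gof f (ggam s M (W ω 0)) (Fin.tail (W ω)) ∂μ)
        - ∫ ω, Gof f (s 0) (Fin.tail (W ω)) ∂μ := by
    rw [← integral_finset_sum _ (fun k _ => haint k)]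
    have hpt : ∀ ω, (∑ k ∈ Finset.range (M - 1),
        (if s (k+1) ≤ W ω 0 then (1:ℝ) else 0)
          * (Gof f (s (k+1)) (Fin.tail (W ω)) - Gof f (s k) (Fin.tail (W ω))))
        = Gof f (ggam s M (W ω 0)) (Fin.tail (W ω)) - Gof f (s 0) (Fin.tail (W ω)) := by
      intro ω
      have := ggam_telescope hs hM (fun u => Gof f u (Fin.tail (W ω))) (W ω 0)
      rw [← this]
      refine Finset.sum_congr rfl (fun k _ => ?_)
      by_cases h : s (k+1) ≤ W ω 0
      · rw [if_pos h, if_pos h, one_mul]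
      · rw [if_neg h, if_neg h, zero_mul]
    rw [integral_congr_ae (Filter.Eventually.of_forall hpt)]
    refine integral_sub ?_ ?_
    · exact integrable_of_bdd (hGm.comp ((hγm.comp hW0).prodMk hTl)).aestronglyMeasurable
        (C := C + C) (fun ω => Gof_bdd hC _ _)
    · exact integrable_of_bdd (hGm.comp (measurable_const.prodMk hTl)).aestronglyMeasurable
        (C := C + C) (fun ω => Gof_bdd hC _ _)
  -- coefficient rewriting
  have hcoef : ∀ t : ℝ, (μ {ω | t ≤ W ω 0}).toReal
      = ∫ u, (if t ≤ u then (1:ℝ) else 0) ∂ν := by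
    intro t
    rw [indicator_integral ν (fun u => t ≤ u) measurableSet_Ici]
    congr 1
    have hIci : {u : ℝ | t ≤ u} = Set.Ici t := rfl
    rw [hIci, hν, Measure.map_apply hW0 measurableSet_Ici]
    rfl
  -- measurability of the inner integral function
  have hΦsm : StronglyMeasurable (fun z : Fin n → ℝ => ∫ u, Gof f (ggam s M u) z ∂ν) := by
    have hj : StronglyMeasurable (fun p : (Fin n → ℝ) × ℝ => Gof f (ggam s M p.2) p.1) :=
      (hGm.comp ((hγm.comp measurable_snd).prodMk measurable_fst)).stronglyMeasurable
    exact hj.integral_prod_right'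
  have hΦb : ∀ z : Fin n → ℝ, |∫ u, Gof f (ggam s M u) z ∂ν| ≤ C + C := by
    intro z
    rw [← Real.norm_eq_abs]
    calc ‖∫ u, Gof f (ggam s M u) z ∂ν‖ ≤ (C+C) * (ν Set.univ).toReal :=
          norm_integral_le_of_norm_le_const (Filter.Eventually.of_forall (fun u => by
            rw [Real.norm_eq_abs]; exact Gof_bdd hC _ _))
      _ = C + C := by simp
  -- Part C : sum of second parts
  have partC : ∑ k ∈ Finset.range (M - 1),
      ((μ {ω | s (k+1) ≤ W ω 0}).toReal
        * ∫ ω, (Gof f (s (k+1)) (Fin.tail (W ω)) - Gof f (s k) (Fin.tail (W ω))) ∂μ)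
      = (∫ ω, (∫ u, Gof f (ggam s M u) (Fin.tail (W ω)) ∂ν) ∂μ)
        - ∫ ω, Gof f (s 0) (Fin.tail (W ω)) ∂μ := by
    have e1 : ∀ k ∈ Finset.range (M-1), (μ {ω | s (k+1) ≤ W ω 0}).toReal
        * ∫ ω, (Gof f (s (k+1)) (Fin.tail (W ω)) - Gof f (s k) (Fin.tail (W ω))) ∂μ
        = ∫ ω, (μ {ω' | s (k+1) ≤ W ω' 0}).toReal
            * (Gof f (s (k+1)) (Fin.tail (W ω)) - Gof f (s k) (Fin.tail (W ω))) ∂μ := by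
      intro k _
      rw [integral_const_mul]
    rw [Finset.sum_congr rfl e1, ← integral_finset_sum]
    swap
    · intro k _
      refine integrable_of_bdd (measurable_const.mul (hDkm k)).aestronglyMeasurable
        (C := ((C+C)+(C+C)) * ((C+C)+(C+C) + 1)) (fun ω => ?_)
      rw [abs_mul]
      have h1 : (μ {ω' | s (k+1) ≤ W ω' 0}).toReal ≤ 1 := by
        rw [← ENNReal.toReal_one]
        exact ENNReal.toReal_mono (by simp) prob_le_one
      have h2 := hDkb k ω
      have h3 : |(μ {ω' | s (k+1) ≤ W ω' 0}).toReal| ≤ 1 := by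
        rw [abs_of_nonneg ENNReal.toReal_nonneg]; exact h1
      have h4 : (0:ℝ) ≤ (C+C)+(C+C) := le_trans (abs_nonneg _) h2
      nlinarith [abs_nonneg (Gof f (s (k+1)) (Fin.tail (W ω)) - Gof f (s k) (Fin.tail (W ω)))]
    have hpt : ∀ ω, (∑ k ∈ Finset.range (M - 1),
        (μ {ω' | s (k+1) ≤ W ω' 0}).toReal
          * (Gof f (s (k+1)) (Fin.tail (W ω)) - Gof f (s k) (Fin.tail (W ω))))
        = (∫ u, Gof f (ggam s M u) (Fin.tail (W ω)) ∂ν) - Gof f (s 0) (Fin.tail (W ω)) := by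
      intro ω
      have e2 : ∀ k ∈ Finset.range (M-1), (μ {ω' | s (k+1) ≤ W ω' 0}).toReal
          * (Gof f (s (k+1)) (Fin.tail (W ω)) - Gof f (s k) (Fin.tail (W ω)))
          = ∫ u, (if s (k+1) ≤ u then (1:ℝ) else 0)
              * (Gof f (s (k+1)) (Fin.tail (W ω)) - Gof f (s k) (Fin.tail (W ω))) ∂ν := by
        intro k _
        rw [integral_mul_const, ← hcoef (s (k+1))]
      rw [Finset.sum_congr rfl e2, ← integral_finset_sum]
      swap
      · intro k _
        refine integrable_of_bdd ?_ (C := (C+C)+(C+C)) (fun u => ?_)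
        · exact ((Measurable.ite measurableSet_Ici measurable_const measurable_const).mul
            measurable_const).aestronglyMeasurable
        · rw [abs_mul]
          by_cases h : s (k+1) ≤ u
          · rw [if_pos h]; simpa using hDkb k ω
          · rw [if_neg h]
            simp only [abs_zero, zero_mul]
            linarith [hDkb k ω, abs_nonneg (Gof f (s (k+1)) (Fin.tail (W ω))
              - Gof f (s k) (Fin.tail (W ω)))]
      have hpt2 : ∀ u : ℝ, (∑ k ∈ Finset.range (M - 1),
          (if s (k+1) ≤ u then (1:ℝ) else 0)
            * (Gof f (s (k+1)) (Fin.tail (W ω)) - Gof f (s k) (Fin.tail (W ω))))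
          = Gof f (ggam s M u) (Fin.tail (W ω)) - Gof f (s 0) (Fin.tail (W ω)) := by
        intro u
        have := ggam_telescope hs hM (fun y => Gof f y (Fin.tail (W ω))) u
        rw [← this]
        refine Finset.sum_congr rfl (fun k _ => ?_)
        by_cases h : s (k+1) ≤ u
        · rw [if_pos h, if_pos h, one_mul]
        · rw [if_neg h, if_neg h, zero_mul]
      rw [integral_congr_ae (Filter.Eventually.of_forall hpt2)]
      rw [integral_sub ?_ (integrable_const _)]
      · rw [integral_const]
        simp
      · refine integrable_of_bdd ?_ (C := C + C) (fun u => Gof_bdd hC _ _)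
        exact (hGm.comp ((hγm).prodMk measurable_const)).aestronglyMeasurable
    rw [integral_congr_ae (Filter.Eventually.of_forall hpt)]
    refine integral_sub ?_ ?_
    · refine integrable_of_bdd ?_ (C := C + C) (fun ω => hΦb _)
      exact (hΦsm.measurable.comp hTl).aestronglyMeasurable
    · exact integrable_of_bdd (hGm.comp (measurable_const.prodMk hTl)).aestronglyMeasurable
        (C := C + C) (fun ω => Gof_bdd hC _ _)
  rw [Finset.sum_sub_distrib, partB, partC]
  ring
-- chunk 6 : the induction step and the theorem
lemma step_lemma {Ω₁ Ω₂ : Type*} [MeasurableSpace Ω₁] [MeasurableSpace Ω₂]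
    (μ₁ : Measure Ω₁) (μ₂ : Measure Ω₂)
    [IsProbabilityMeasure μ₁] [IsProbabilityMeasure μ₂] {n : ℕ}
    (IH : ∀ (X : Ω₁ → Fin n → ℝ) (Y : Ω₂ → Fin n → ℝ),
      Measurable X → Measurable Y →
      (∀ i, Measure.map (fun ω => X ω i) μ₁ = Measure.map (fun ω => Y ω i) μ₂) →
      WCSle μ₁ μ₂ X Y →
      ∀ g : (Fin n → ℝ) → ℝ, Measurable g → Supermodular g → IsBdd g →
        ∫ ω, g (X ω) ∂μ₁ ≤ ∫ ω, g (Y ω) ∂μ₂)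
    (X : Ω₁ → Fin (n+1) → ℝ) (Y : Ω₂ → Fin (n+1) → ℝ)
    (hX : Measurable X) (hY : Measurable Y)
    (hmarg : ∀ i, Measure.map (fun ω => X ω i) μ₁ = Measure.map (fun ω => Y ω i) μ₂)
    (hwcs : WCSle μ₁ μ₂ X Y)
    (f : (Fin (n+1) → ℝ) → ℝ) (hfm : Measurable f) (hsm : Supermodular f) (hbdd : IsBdd f) :
    ∫ ω, f (X ω) ∂μ₁ ≤ ∫ ω, f (Y ω) ∂μ₂ := by
  obtain ⟨C, hC⟩ := hbdd
  have hC0 : 0 ≤ C := le_trans (abs_nonneg _) (hC 0)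
  have hX0 : Measurable fun ω => X ω 0 := (measurable_pi_apply 0).comp hX
  have hY0 : Measurable fun ω => Y ω 0 := (measurable_pi_apply 0).comp hY
  have hTX : Measurable fun ω => Fin.tail (X ω) := measurable_tailF.comp hX
  have hTY : Measurable fun ω => Fin.tail (Y ω) := measurable_tailF.comp hY
  have hGm := measurable_GofP hfm
  set m : Measure ℝ := Measure.map (fun ω => X ω 0) μ₁ with hmdef
  haveI : IsProbabilityMeasure m := Measure.isProbabilityMeasure_map hX0.aemeasurable
  obtain ⟨s, M, hsmono, hMpos, hconv⟩ := exists_grid hsm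
  have hγm : ∀ p, Measurable (ggam (s p) (M p)) :=
    fun p => (ggam_monotone (hsmono p)).measurable
  -- stagewise inequality
  have hstage : ∀ p : ℕ,
      ((∫ ω, Gof f (ggam (s p) (M p) (X ω 0)) (Fin.tail (X ω)) ∂μ₁)
        - ∫ ω, (∫ u, Gof f (ggam (s p) (M p) u) (Fin.tail (X ω)) ∂m) ∂μ₁)
      ≤ ((∫ ω, Gof f (ggam (s p) (M p) (Y ω 0)) (Fin.tail (Y ω)) ∂μ₂)
        - ∫ ω, (∫ u, Gof f (ggam (s p) (M p) u) (Fin.tail (Y ω)) ∂m) ∂μ₂) := by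
    intro p
    rw [hmdef, ← grid_identity μ₁ X hX f hfm hC (s p) (M p) (hsmono p) (hMpos p),
      hmarg 0, ← grid_identity μ₂ Y hY f hfm hC (s p) (M p) (hsmono p) (hMpos p)]
    refine Finset.sum_le_sum (fun k _ => ?_)
    have hmonoD : Monotone (fun v : Fin (n+1) → ℝ =>
        Gof f (s p (k+1)) (Fin.tail v) - Gof f (s p k) (Fin.tail v)) := by
      intro v w hvw
      have h1 := supermod_cons_diff_mono hsm (hsmono p (Nat.le_succ k)) (monotone_tailF hvw)
      simp only at h1
      simp only [Gof]
      linarith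
    have hmD : Measurable (fun v : Fin (n+1) → ℝ =>
        Gof f (s p (k+1)) (Fin.tail v) - Gof f (s p k) (Fin.tail v)) :=
      (hGm.comp (measurable_const.prodMk measurable_tailF)).sub
        (hGm.comp (measurable_const.prodMk measurable_tailF))
    have hbD : ∀ v : Fin (n+1) → ℝ,
        |Gof f (s p (k+1)) (Fin.tail v) - Gof f (s p k) (Fin.tail v)| ≤ (C+C)+(C+C) := by
      intro v
      calc |Gof f (s p (k+1)) (Fin.tail v) - Gof f (s p k) (Fin.tail v)|
          ≤ |Gof f (s p (k+1)) (Fin.tail v)| + |Gof f (s p k) (Fin.tail v)| := abs_sub _ _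
        _ ≤ (C+C)+(C+C) := add_le_add (Gof_bdd hC _ _) (Gof_bdd hC _ _)
    have hdepD : DepOn (fun v : Fin (n+1) → ℝ =>
        Gof f (s p (k+1)) (Fin.tail v) - Gof f (s p k) (Fin.tail v))
        {j | (0 : Fin (n+1)) < j} := by
      intro x y hxy
      have htl : Fin.tail x = Fin.tail y := funext (fun i => hxy i.succ (Fin.succ_pos i))
      simp only [htl]
    exact covC_le hX hY hwcs (s p (k+1)) _ hmD hmonoD hbD hdepD
  -- limits
  have hL1X : Filter.Tendsto
      (fun p => ∫ ω, Gof f (ggam (s p) (M p) (X ω 0)) (Fin.tail (X ω)) ∂μ₁)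
      Filter.atTop (nhds (∫ ω, Gof f (X ω 0) (Fin.tail (X ω)) ∂μ₁)) := by
    refine tendsto_integral_of_dominated_convergence (fun _ => C + C) ?_ (integrable_const _) ?_ ?_
    · intro p
      exact (hGm.comp (((hγm p).comp hX0).prodMk hTX)).aestronglyMeasurable
    · intro p
      exact Filter.Eventually.of_forall
        (fun ω => by rw [Real.norm_eq_abs]; exact Gof_bdd hC _ _)
    · exact Filter.Eventually.of_forall (fun ω => hconv (X ω 0) (Fin.tail (X ω)))
  have hL1Y : Filter.Tendsto
      (fun p => ∫ ω, Gof f (ggam (s p) (M p) (Y ω 0)) (Fin.tail (Y ω)) ∂μ₂)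
      Filter.atTop (nhds (∫ ω, Gof f (Y ω 0) (Fin.tail (Y ω)) ∂μ₂)) := by
    refine tendsto_integral_of_dominated_convergence (fun _ => C + C) ?_ (integrable_const _) ?_ ?_
    · intro p
      exact (hGm.comp (((hγm p).comp hY0).prodMk hTY)).aestronglyMeasurable
    · intro p
      exact Filter.Eventually.of_forall
        (fun ω => by rw [Real.norm_eq_abs]; exact Gof_bdd hC _ _)
    · exact Filter.Eventually.of_forall (fun ω => hconv (Y ω 0) (Fin.tail (Y ω)))
  have hinnerm : ∀ p : ℕ, Measurable (fun z : Fin n → ℝ =>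
      ∫ u, Gof f (ggam (s p) (M p) u) z ∂m) := by
    intro p
    have hj : StronglyMeasurable (fun pt : (Fin n → ℝ) × ℝ =>
        Gof f (ggam (s p) (M p) pt.2) pt.1) :=
      (hGm.comp (((hγm p).comp measurable_snd).prodMk measurable_fst)).stronglyMeasurable
    exact hj.integral_prod_right'.measurable
  have hinnerb : ∀ (p : ℕ) (z : Fin n → ℝ),
      ‖∫ u, Gof f (ggam (s p) (M p) u) z ∂m‖ ≤ C + C := by
    intro p z
    calc ‖∫ u, Gof f (ggam (s p) (M p) u) z ∂m‖ ≤ (C+C) * (m Set.univ).toReal :=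
          norm_integral_le_of_norm_le_const (Filter.Eventually.of_forall
            (fun u => by rw [Real.norm_eq_abs]; exact Gof_bdd hC _ _))
      _ = C + C := by simp
  have hL2gen : ∀ (z : Fin n → ℝ), Filter.Tendsto
      (fun p => ∫ u, Gof f (ggam (s p) (M p) u) z ∂m) Filter.atTop
      (nhds (∫ u, Gof f u z ∂m)) := by
    intro z
    refine tendsto_integral_of_dominated_convergence (fun _ => C + C) ?_ (integrable_const _) ?_ ?_
    · intro p
      exact (hGm.comp ((hγm p).prodMk measurable_const)).aestronglyMeasurable
    · intro p
      exact Filter.Eventually.of_forall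
        (fun u => by rw [Real.norm_eq_abs]; exact Gof_bdd hC _ _)
    · exact Filter.Eventually.of_forall (fun u => hconv u z)
  have hL2X : Filter.Tendsto
      (fun p => ∫ ω, (∫ u, Gof f (ggam (s p) (M p) u) (Fin.tail (X ω)) ∂m) ∂μ₁)
      Filter.atTop (nhds (∫ ω, (∫ u, Gof f u (Fin.tail (X ω)) ∂m) ∂μ₁)) := by
    refine tendsto_integral_of_dominated_convergence (fun _ => C + C) ?_ (integrable_const _) ?_ ?_
    · intro p
      exact ((hinnerm p).comp hTX).aestronglyMeasurable
    · intro p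
      exact Filter.Eventually.of_forall (fun ω => hinnerb p _)
    · exact Filter.Eventually.of_forall (fun ω => hL2gen (Fin.tail (X ω)))
  have hL2Y : Filter.Tendsto
      (fun p => ∫ ω, (∫ u, Gof f (ggam (s p) (M p) u) (Fin.tail (Y ω)) ∂m) ∂μ₂)
      Filter.atTop (nhds (∫ ω, (∫ u, Gof f u (Fin.tail (Y ω)) ∂m) ∂μ₂)) := by
    refine tendsto_integral_of_dominated_convergence (fun _ => C + C) ?_ (integrable_const _) ?_ ?_
    · intro p
      exact ((hinnerm p).comp hTY).aestronglyMeasurable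
    · intro p
      exact Filter.Eventually.of_forall (fun ω => hinnerb p _)
    · exact Filter.Eventually.of_forall (fun ω => hL2gen (Fin.tail (Y ω)))
  have KEY1 := le_of_tendsto_of_tendsto' (hL1X.sub hL2X) (hL1Y.sub hL2Y) hstage
  -- decomposition of f
  have hdecX : ∀ ω, f (X ω) = Gof f (X ω 0) (Fin.tail (X ω)) + f (Fin.cons (X ω 0) 0) := by
    intro ω
    unfold Gof
    rw [Fin.cons_self_tail]
    ring
  have hdecY : ∀ ω, f (Y ω) = Gof f (Y ω 0) (Fin.tail (Y ω)) + f (Fin.cons (Y ω 0) 0) := by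
    intro ω
    unfold Gof
    rw [Fin.cons_self_tail]
    ring
  have hGXint : Integrable (fun ω => Gof f (X ω 0) (Fin.tail (X ω))) μ₁ :=
    integrable_of_bdd (hGm.comp (hX0.prodMk hTX)).aestronglyMeasurable
      (C := C + C) (fun ω => Gof_bdd hC _ _)
  have hGYint : Integrable (fun ω => Gof f (Y ω 0) (Fin.tail (Y ω))) μ₂ :=
    integrable_of_bdd (hGm.comp (hY0.prodMk hTY)).aestronglyMeasurable
      (C := C + C) (fun ω => Gof_bdd hC _ _)
  have hconsm : Measurable (fun u : ℝ => f (Fin.cons u 0)) :=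
    hfm.comp (measurable_consL.comp (measurable_id.prodMk measurable_const))
  have haXint : Integrable (fun ω => f (Fin.cons (X ω 0) 0)) μ₁ :=
    integrable_of_bdd ((hconsm.comp hX0)).aestronglyMeasurable (C := C) (fun ω => hC _)
  have haYint : Integrable (fun ω => f (Fin.cons (Y ω 0) 0)) μ₂ :=
    integrable_of_bdd ((hconsm.comp hY0)).aestronglyMeasurable (C := C) (fun ω => hC _)
  have hsplitX : ∫ ω, f (X ω) ∂μ₁
      = (∫ ω, Gof f (X ω 0) (Fin.tail (X ω)) ∂μ₁) + ∫ ω, f (Fin.cons (X ω 0) 0) ∂μ₁ := by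
    rw [← integral_add hGXint haXint]
    exact integral_congr_ae (Filter.Eventually.of_forall hdecX)
  have hsplitY : ∫ ω, f (Y ω) ∂μ₂
      = (∫ ω, Gof f (Y ω 0) (Fin.tail (Y ω)) ∂μ₂) + ∫ ω, f (Fin.cons (Y ω 0) 0) ∂μ₂ := by
    rw [← integral_add hGYint haYint]
    exact integral_congr_ae (Filter.Eventually.of_forall hdecY)
  have haEq : ∫ ω, f (Fin.cons (X ω 0) 0) ∂μ₁ = ∫ ω, f (Fin.cons (Y ω 0) 0) ∂μ₂ := by
    have h1 : ∫ u, f (Fin.cons u 0) ∂(Measure.map (fun ω => X ω 0) μ₁)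
        = ∫ ω, f (Fin.cons (X ω 0) 0) ∂μ₁ :=
      integral_map hX0.aemeasurable hconsm.aestronglyMeasurable
    have h2 : ∫ u, f (Fin.cons u 0) ∂(Measure.map (fun ω => Y ω 0) μ₂)
        = ∫ ω, f (Fin.cons (Y ω 0) 0) ∂μ₂ :=
      integral_map hY0.aemeasurable hconsm.aestronglyMeasurable
    rw [← h1, ← h2, hmarg 0]
  -- the IH applied to the tails
  set gfun : (Fin n → ℝ) → ℝ := fun z => ∫ u, f (Fin.cons u z) ∂m with hgdef
  have hgm : Measurable gfun := by
    have hj : StronglyMeasurable (fun pt : (Fin n → ℝ) × ℝ => f (Fin.cons pt.2 pt.1)) :=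
      (hfm.comp (measurable_consL.comp (measurable_snd.prodMk measurable_fst))).stronglyMeasurable
    exact hj.integral_prod_right'.measurable
  have hgb : ∀ z, |gfun z| ≤ C := by
    intro z
    rw [← Real.norm_eq_abs]
    calc ‖∫ u, f (Fin.cons u z) ∂m‖ ≤ C * (m Set.univ).toReal :=
          norm_integral_le_of_norm_le_const (Filter.Eventually.of_forall
            (fun u => by rw [Real.norm_eq_abs]; exact hC _))
      _ = C := by simp
  have hgsm : Supermodular gfun := supermodular_integral hsm hfm hC m
  have hwcsT : WCSle μ₁ μ₂ (fun ω => Fin.tail (X ω)) (fun ω => Fin.tail (Y ω)) := by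
    intro i t f' hi hf'm hf'mono hf'b hf'dep
    obtain ⟨c, hc⟩ := hf'b
    have h1 : ((i.succ : Fin (n+1)) : ℕ) + 1 < n + 1 := by
      simp only [Fin.val_succ]
      omega
    have h5 : DepOn (fun v : Fin (n+1) → ℝ => f' (Fin.tail v)) {j | i.succ < j} := by
      intro x y hxy
      refine hf'dep (Fin.tail x) (Fin.tail y) (fun j hj => ?_)
      exact hxy j.succ (Fin.succ_lt_succ_iff.2 hj)
    exact hwcs i.succ t (fun v => f' (Fin.tail v)) h1 (hf'm.comp measurable_tailF)
      (hf'mono.comp monotone_tailF) ⟨c, fun v => hc _⟩ h5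
  have hmargT : ∀ i : Fin n, Measure.map (fun ω => Fin.tail (X ω) i) μ₁
      = Measure.map (fun ω => Fin.tail (Y ω) i) μ₂ := by
    intro i
    have e1 : (fun ω => Fin.tail (X ω) i) = fun ω => X ω i.succ := rfl
    have e2 : (fun ω => Fin.tail (Y ω) i) = fun ω => Y ω i.succ := rfl
    rw [e1, e2]
    exact hmarg i.succ
  have KEY3 := IH _ _ hTX hTY hmargT hwcsT gfun hgm hgsm ⟨C, hgb⟩
  -- rewrite the inner integrals via gfun
  have hconsint : ∀ z : Fin n → ℝ, Integrable (fun u => f (Fin.cons u z)) m := by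
    intro z
    refine integrable_of_bdd ?_ (C := C) (fun u => hC _)
    exact (hfm.comp (measurable_consL.comp (measurable_id.prodMk measurable_const))).aestronglyMeasurable
  have hκint : Integrable (fun u : ℝ => f (Fin.cons u 0)) m :=
    integrable_of_bdd hconsm.aestronglyMeasurable (C := C) (fun u => hC _)
  have hgtil : ∀ z : Fin n → ℝ, (∫ u, Gof f u z ∂m)
      = gfun z - ∫ u, f (Fin.cons u 0) ∂m := by
    intro z
    unfold Gof
    rw [integral_sub (hconsint z) hκint]
  have hgfunXint : Integrable (fun ω => gfun (Fin.tail (X ω))) μ₁ :=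
    integrable_of_bdd ((hgm.comp hTX)).aestronglyMeasurable (C := C) (fun ω => hgb _)
  have hgfunYint : Integrable (fun ω => gfun (Fin.tail (Y ω))) μ₂ :=
    integrable_of_bdd ((hgm.comp hTY)).aestronglyMeasurable (C := C) (fun ω => hgb _)
  have hBX : ∫ ω, (∫ u, Gof f u (Fin.tail (X ω)) ∂m) ∂μ₁
      = (∫ ω, gfun (Fin.tail (X ω)) ∂μ₁) - ∫ u, f (Fin.cons u 0) ∂m := by
    rw [integral_congr_ae (Filter.Eventually.of_forall (fun ω => hgtil (Fin.tail (X ω))))]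
    rw [integral_sub hgfunXint (integrable_const _), integral_const]
    simp
  have hBY : ∫ ω, (∫ u, Gof f u (Fin.tail (Y ω)) ∂m) ∂μ₂
      = (∫ ω, gfun (Fin.tail (Y ω)) ∂μ₂) - ∫ u, f (Fin.cons u 0) ∂m := by
    rw [integral_congr_ae (Filter.Eventually.of_forall (fun ω => hgtil (Fin.tail (Y ω))))]
    rw [integral_sub hgfunYint (integrable_const _), integral_const]
    simp
  rw [hsplitX, hsplitY]
  rw [hBX, hBY] at KEY1
  linarith [KEY1, KEY3, haEq]

/-- if `X` and `Y` have equal marginals (`X_i =ᵈ Y_i` for all `i`) and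
`X ≤_wcs Y`, then `X ≤_sm Y`: `E f(X) ≤ E f(Y)` for every bounded measurable supermodular
function `f`. -/
theorem stmt10 {Ω₁ Ω₂ : Type*} [MeasurableSpace Ω₁] [MeasurableSpace Ω₂]
    (μ₁ : Measure Ω₁) (μ₂ : Measure Ω₂)
    [IsProbabilityMeasure μ₁] [IsProbabilityMeasure μ₂] {n : ℕ}
    (X : Ω₁ → Fin n → ℝ) (Y : Ω₂ → Fin n → ℝ)
    (hX : Measurable X) (hY : Measurable Y)
    (hmarg : ∀ i, Measure.map (fun ω => X ω i) μ₁ = Measure.map (fun ω => Y ω i) μ₂)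
    (hwcs : WCSle μ₁ μ₂ X Y) :
    ∀ f : (Fin n → ℝ) → ℝ, Measurable f → Supermodular f → IsBdd f →
      ∫ ω, f (X ω) ∂μ₁ ≤ ∫ ω, f (Y ω) ∂μ₂ := by
  
  induction n with
  | zero =>
    intro f hfm hsm hbdd
    have h1 : ∀ v w : Fin 0 → ℝ, v = w := fun v w => funext (fun i => i.elim0)
    have e1 : (fun ω => f (X ω)) = fun _ => f (fun i => i.elim0) :=
      funext (fun ω => congrArg f (h1 _ _))
    have e2 : (fun ω => f (Y ω)) = fun _ => f (fun i => i.elim0) :=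
      funext (fun ω => congrArg f (h1 _ _))
    rw [e1, e2, integral_const, integral_const]
    simp
  | succ n IH =>
    exact step_lemma μ₁ μ₂ (fun X' Y' hX' hY' hm' hw' => IH X' Y' hX' hY' hm' hw')
      X Y hX hY hmarg hwcs
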